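/- Suppose for each i, (Hᵢ + αI)yᵢ − gᵢ + λᵢ + s = 0 and (Hᵢ + αI)yᵢ* − gᵢ + λᵢ* = 0 where Hᵢ is symmetric positive semidefinite and α > 0. Then Σᵢ⟨λᵢ + s − λᵢ*, yᵢ − yᵢ*⟩ ≤ −α Σᵢ‖yᵢ − yᵢ*‖². -/

import Mathlib

open Matrix
open scoped RealInnerProductSpace BigOperators

lemma aux_inner_nonneg {d : ℕ} {A : Matrix (Fin d) (Fin d) ℝ} (hA : A.PosSemidef)
    (x : EuclideanSpace ℝ (Fin d)) :
    0 ≤ ⟪(Matrix.toEuclideanCLM (𝕜 := ℝ) A) x, x⟫ := by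
  have h := hA.dotProduct_mulVec_nonneg (WithLp.ofLp x)
  simp only [star_trivial] at h
  rw [real_inner_comm]
  refine h.trans_eq ?_
  rw [EuclideanSpace.inner_eq_star_dotProduct, ofLp_toEuclideanCLM, star_trivial, dotProduct_comm]

/-- Lemma 1 of FedNew: If for each `i`,
`(Hᵢ + αI) yᵢ − gᵢ + λᵢ + s = 0` and `(Hᵢ + αI) yᵢ⋆ − gᵢ + λᵢ⋆ = 0` with `Hᵢ`
symmetric PSD and `α > 0`, then
`Σᵢ ⟨λᵢ + s − λᵢ⋆, yᵢ − yᵢ⋆⟩ ≤ −α Σᵢ ‖yᵢ − yᵢ⋆‖²`. -/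
theorem fednew_lemma1
    {d n : ℕ}
    (H : Fin n → Matrix (Fin d) (Fin d) ℝ)
    (hHsymm : ∀ i, (H i).IsSymm) (hHpsd : ∀ i, (H i).PosSemidef)
    (α : ℝ) (hα : 0 < α)
    (y ystar g lam lamstar : Fin n → EuclideanSpace ℝ (Fin d))
    (s : EuclideanSpace ℝ (Fin d))
    (hprim : ∀ i,
      (Matrix.toEuclideanCLM (𝕜 := ℝ) (H i + α • (1 : Matrix (Fin d) (Fin d) ℝ))) (y i)
        - g i + lam i + s = 0)
    (hdual : ∀ i,
      (Matrix.toEuclideanCLM (𝕜 := ℝ) (H i + α • (1 : Matrix (Fin d) (Fin d) ℝ)))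
          (ystar i) - g i + lamstar i = 0) :
    ∑ i, ⟪lam i + s - lamstar i, y i - ystar i⟫ ≤ -α * ∑ i, ‖y i - ystar i‖ ^ 2 := by
  have hrw : -α * ∑ i, ‖y i - ystar i‖ ^ 2 = ∑ i, -(α * ‖y i - ystar i‖ ^ 2) := by
    rw [neg_mul, Finset.mul_sum, ← Finset.sum_neg_distrib]
  rw [hrw]
  apply Finset.sum_le_sum
  intro i _
  have hkey : lam i + s - lamstar i
      = -((Matrix.toEuclideanCLM (𝕜 := ℝ) (H i + α • (1 : Matrix (Fin d) (Fin d) ℝ)))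
        (y i - ystar i)) := by
    set T := Matrix.toEuclideanCLM (𝕜 := ℝ) (H i + α • (1 : Matrix (Fin d) (Fin d) ℝ))
    have h3 : (T (y i) - g i + lam i + s) - (T (ystar i) - g i + lamstar i) = 0 := by
      rw [hprim i, hdual i, sub_zero]
    calc lam i + s - lamstar i
        = -(T (y i) - T (ystar i))
          + ((T (y i) - g i + lam i + s) - (T (ystar i) - g i + lamstar i)) := by abel
      _ = -(T (y i - ystar i)) := by rw [h3, map_sub]; abel
  rw [hkey, inner_neg_left]
  have hsplit : (Matrix.toEuclideanCLM (𝕜 := ℝ) (H i + α • (1 : Matrix (Fin d) (Fin d) ℝ)))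
      (y i - ystar i)
      = (Matrix.toEuclideanCLM (𝕜 := ℝ) (H i)) (y i - ystar i) + α • (y i - ystar i) := by
    simp [map_add, _root_.map_smul]
  rw [hsplit, inner_add_left, inner_smul_left]
  have hpsd := aux_inner_nonneg (hHpsd i) (y i - ystar i)
  have : ⟪y i - ystar i, y i - ystar i⟫ = ‖y i - ystar i‖ ^ 2 := real_inner_self_eq_norm_sq _
  simp only [RCLike.conj_to_real] at *
  nlinarith [hpsd]
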